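/- Let d ≥ 1 be an integer and z a complex number with Im z > 0 such that A(0,d;z) < π. Write w_m := C_d(z+d−m) ∈ ℂ for m = 0, …, d, regarded as vectors in ℝ². Then: (1) for all 0 ≤ m < m' ≤ d, Im( conj(w_m) · w_{m'} ) > 0 (in particular w_0 and w_d are linearly independent over ℝ and the w_m appear in strict counterclockwise cyclic order); (2) for every 0 ≤ m ≤ d there exist real numbers s, t ≥ 0 with w_m = s·w_0 + t·w_d, i.e., every w_m lies in the pointed convex cone spanned by w_0 and w_d. -/

import Mathlib

open ComplexConjugate

/-- The binomial coefficient polynomial `C_d(w) = (1/d!) ∏_{i=0}^{d-1} (w - i)`. -/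
noncomputable def binomC (d : ℕ) (w : ℂ) : ℂ :=
  (∏ i ∈ Finset.range d, (w - i)) / (Nat.factorial d)

/-- The angle sum `A(j,k;z) = Σ_{m=j}^{k-1} (arg(z-m) - arg(z+d-m))`. -/
noncomputable def angleSum (d j k : ℕ) (z : ℂ) : ℝ :=
  ∑ m ∈ Finset.Icc j (k - 1), (Complex.arg (z - m) - Complex.arg (z + d - m))

private lemma arg_pos_lt_pi {u : ℂ} (h : 0 < u.im) : 0 < u.arg ∧ u.arg < Real.pi := by
  refine ⟨lt_of_le_of_ne (Complex.arg_nonneg_iff.mpr h.le) fun he => ?_,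
    Complex.arg_lt_pi_iff.mpr (Or.inr (by positivity))⟩
  have := (Complex.arg_eq_zero_iff.mp he.symm).2; linarith

private lemma arg_div_upper {u v : ℂ} (hu : 0 < u.im) (hv : 0 < v.im) (hq : 0 < (u/v).im) :
    (u/v).arg = u.arg - v.arg := by
  have hu0 : u ≠ 0 := fun h => by simp [h] at hu
  have hv0 : v ≠ 0 := fun h => by simp [h] at hv
  have h1 := Complex.arg_div_coe_angle hu0 hv0
  rw [← Real.Angle.coe_sub, Real.Angle.angle_eq_iff_two_pi_dvd_sub] at h1
  obtain ⟨k, hk⟩ := h1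
  obtain ⟨hq1, hq2⟩ := arg_pos_lt_pi hq
  obtain ⟨hu1, hu2⟩ := arg_pos_lt_pi hu
  obtain ⟨hv1, hv2⟩ := arg_pos_lt_pi hv
  have hpi := Real.pi_pos
  have hk0 : k = 0 := by
    rcases lt_trichotomy k 0 with h | h | h
    · have : (k : ℝ) ≤ -1 := by exact_mod_cast (by omega : k ≤ -1)
      nlinarith
    · exact h
    · have : (1 : ℝ) ≤ (k : ℝ) := by exact_mod_cast h
      nlinarith
  rw [hk0] at hk; push_cast at hk; linarith

/-- Corollary 4.8: outside `cl 𝒟_{0,d;1}` (i.e. when `A(0,d;z) < π`), the vectors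
`w_m = C_d(z+d-m)` appear in strict counterclockwise order, and the cone they span
is pointed with facets spanned by `w_0` and `w_d`. -/
theorem stmt_14 (d : ℕ) (hd : 1 ≤ d) (z : ℂ) (hz : 0 < z.im)
    (hA : angleSum d 0 d z < Real.pi) :
    (∀ m m' : ℕ, m < m' → m' ≤ d →
        0 < (conj (binomC d (z + d - m)) * binomC d (z + d - m')).im)
    ∧ (∀ m : ℕ, m ≤ d → ∃ s t : ℝ, 0 ≤ s ∧ 0 ≤ t ∧
        binomC d (z + d - m)
          = (s : ℂ) * binomC d (z + d - (0 : ℕ)) + (t : ℂ) * binomC d (z + d - (d : ℕ))) := by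
  set w : ℕ → ℂ := fun m => binomC d (z + d - m) with hw
  -- basic facts
  have hzt : ∀ t : ℝ, 0 < (z + t).im := by intro t; simp [hz]
  have hzt0 : ∀ t : ℝ, z + t ≠ 0 := fun t h => by have := hzt t; rw [h] at this; simp at this
  have hwfac : ∀ (m i : ℕ), z + d - m - i = z + Complex.ofReal ((d:ℝ) - m - i) := by
    intro m i; push_cast; ring
  have hwne : ∀ m : ℕ, w m ≠ 0 := by
    intro m
    simp only [hw, binomC, div_ne_zero_iff]
    constructor
    · exact Finset.prod_ne_zero_iff.mpr fun i _ => by rw [hwfac m i]; exact hzt0 _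
    · exact_mod_cast (Nat.factorial_pos d).ne'
  -- the ratio r j
  set r : ℕ → ℂ := fun j => (z - j) / (z + d - j) with hr
  have hnum : ∀ j : ℕ, z - j = z + Complex.ofReal (-(j:ℝ)) := by intro j; push_cast; ring
  have hden : ∀ j : ℕ, z + d - j = z + Complex.ofReal ((d:ℝ) - j) := by intro j; push_cast; ring
  have hrim : ∀ j : ℕ, 0 < (r j).im := by
    intro j
    have hd0 : (0:ℝ) < d := by exact_mod_cast hd
    rw [hr]
    rw [Complex.div_im]
    have hns : 0 < Complex.normSq (z + d - j) := by
      rw [Complex.normSq_pos, hden j]; exact hzt0 _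
    have h1 : (z - (j:ℂ)).im = z.im := by simp
    have h2 : (z - (j:ℂ)).re = z.re - j := by simp
    have h3 : (z + d - (j:ℂ)).im = z.im := by simp
    have h4 : (z + d - (j:ℂ)).re = z.re + d - j := by simp
    rw [h1, h2, h3, h4]
    rw [div_sub_div_same, lt_div_iff₀ hns]
    ring_nf
    nlinarith
  have hrne : ∀ j, r j ≠ 0 := fun j h => by have := hrim j; rw [h] at this; simp at this
  -- arg of r j
  set a : ℕ → ℝ := fun j => (z - j).arg - (z + d - j).arg with ha
  have hargr : ∀ j : ℕ, (r j).arg = a j := by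
    intro j
    refine arg_div_upper ?_ ?_ (hrim j)
    · rw [hnum j]; exact hzt _
    · rw [hden j]; exact hzt _
  have hapos : ∀ j : ℕ, 0 < a j := by
    intro j; rw [← hargr j]; exact (arg_pos_lt_pi (hrim j)).1
  -- angleSum as sum over range d
  have hAsum : angleSum d 0 d z = ∑ j ∈ Finset.range d, a j := by
    rw [angleSum]
    rw [show Finset.Icc 0 (d-1) = Finset.range d by
      ext x; simp only [Finset.mem_Icc, Finset.mem_range]; omega]
  -- partial sums bound
  have hSle : ∀ m m' : ℕ, m' ≤ d → (∑ j ∈ Finset.Ico m m', a j) < Real.pi := by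
    intro m m' hm'
    calc (∑ j ∈ Finset.Ico m m', a j) ≤ ∑ j ∈ Finset.range d, a j := by
          apply Finset.sum_le_sum_of_subset_of_nonneg
          · intro x hx
            simp only [Finset.mem_Ico] at hx
            exact Finset.mem_range.mpr (lt_of_lt_of_le hx.2 hm')
          · intro i _ _; exact (hapos i).le
      _ < Real.pi := by rw [← hAsum]; exact hA
  have hSnn : ∀ m m' : ℕ, 0 ≤ ∑ j ∈ Finset.Ico m m', a j :=
    fun m m' => Finset.sum_nonneg fun j _ => (hapos j).le
  -- recursion: w (k+1) * (z + d - k) = w k * (z - k)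
  have hstep : ∀ k : ℕ, w (k+1) = w k * r k := by
    intro k
    have hkey : w (k+1) * (z + (d:ℂ) - k) = w k * (z - k) := by
      simp only [hw, binomC]
      rw [div_mul_eq_mul_div, div_mul_eq_mul_div]
      congr 1
      have e1 : (∏ i ∈ Finset.range d, (z + d - (↑(k+1):ℂ) - i)) * (z + d - k)
          = ∏ i ∈ Finset.range (d+1), (z + d - (k:ℂ) - i) := by
        rw [Finset.prod_range_succ' (fun i => (z + d - (k:ℂ) - i)) d]
        congr 1
        · apply Finset.prod_congr rfl; intro i _; push_cast; ring
        · push_cast; ring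
      have e2 : (∏ i ∈ Finset.range d, (z + d - (k:ℂ) - i)) * (z - k)
          = ∏ i ∈ Finset.range (d+1), (z + d - (k:ℂ) - i) := by
        rw [Finset.prod_range_succ]
        congr 1; push_cast; ring
      rw [e1, e2]
    have hdk : z + (d:ℂ) - k ≠ 0 := by rw [hden k]; exact hzt0 _
    simp only [hr]; rw [← mul_div_assoc, eq_div_iff hdk]; exact hkey
  -- product formula
  have hprod : ∀ m m' : ℕ, m ≤ m' → w m' = w m * ∏ j ∈ Finset.Ico m m', r j := by
    intro m m' hmm
    induction m' with
    | zero => simp [Nat.le_zero.mp hmm]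
    | succ k ih =>
      rcases Nat.lt_or_ge m (k+1) with h | h
      · have hmk : m ≤ k := Nat.lt_succ_iff.mp h
        rw [Finset.prod_Ico_succ_top hmk, hstep k, ih hmk]; ring
      · have : m = k + 1 := le_antisymm hmm h
        subst this; simp
  -- arg of partial products
  have hargP : ∀ m m' : ℕ, m ≤ m' → m' ≤ d →
      (∏ j ∈ Finset.Ico m m', r j).arg = ∑ j ∈ Finset.Ico m m', a j := by
    intro m m' hmm hm'd
    induction m' with
    | zero => simp [Complex.arg_one]
    | succ k ih =>
      rcases Nat.lt_or_ge m (k+1) with h | h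
      · have hmk : m ≤ k := Nat.lt_succ_iff.mp h
        have hkd : k ≤ d := le_of_lt (Nat.lt_of_succ_le hm'd)
        have ihk := ih hmk hkd
        rw [Finset.prod_Ico_succ_top hmk, Finset.sum_Ico_succ_top hmk]
        have hPne : (∏ j ∈ Finset.Ico m k, r j) ≠ 0 :=
          Finset.prod_ne_zero_iff.mpr fun j _ => hrne j
        rw [Complex.arg_mul_eq_add_arg_iff hPne (hrne k) |>.mpr, ihk, hargr k]
        rw [ihk, hargr k]
        constructor
        · have := hSnn m k; have := hapos k; have := Real.pi_pos; linarith
        · have h2 := hSle m (k+1) hm'd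
          rw [Finset.sum_Ico_succ_top hmk] at h2
          linarith
      · have : m = k + 1 := le_antisymm hmm h
        subst this; simp [Complex.arg_one]
  -- part 1
  have part1 : ∀ m m' : ℕ, m < m' → m' ≤ d →
      0 < (conj (w m) * w m').im := by
    intro m m' hmm hm'd
    have hP : 0 < (∏ j ∈ Finset.Ico m m', r j).im := by
      set P := ∏ j ∈ Finset.Ico m m', r j with hP
      have hPne : P ≠ 0 := Finset.prod_ne_zero_iff.mpr fun j _ => hrne j
      have hargPos : 0 < P.arg := by
        rw [hP, hargP m m' hmm.le hm'd]
        apply Finset.sum_pos (fun j _ => hapos j)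
        exact ⟨m, Finset.mem_Ico.mpr ⟨le_refl m, hmm⟩⟩
      have hsin : 0 < Real.sin P.arg := by
        apply Real.sin_pos_of_pos_of_lt_pi hargPos
        rw [hP, hargP m m' hmm.le hm'd]; exact hSle m m' hm'd
      rw [← Complex.norm_mul_sin_arg P]
      exact mul_pos (norm_pos_iff.mpr hPne) hsin
    rw [hprod m m' hmm.le, ← mul_assoc]
    have : conj (w m) * w m = (Complex.normSq (w m) : ℂ) := by
      rw [mul_comm, Complex.mul_conj]
    rw [this]
    rw [Complex.mul_im, Complex.ofReal_re, Complex.ofReal_im]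
    have hns : 0 < Complex.normSq (w m) := Complex.normSq_pos.mpr (hwne m)
    nlinarith [hP]
  refine ⟨part1, ?_⟩
  -- part 2
  intro m hm
  set D : ℝ := (conj (w 0) * w d).im with hD
  have hDpos : 0 < D := part1 0 d hd le_rfl
  have hdet : ∀ u : ℂ, (conj u * u).im = 0 := by
    intro u; rw [mul_comm, Complex.mul_conj]; simp
  have hs0 : 0 ≤ (conj (w m) * w d).im := by
    rcases lt_or_eq_of_le hm with h | h
    · exact (part1 m d h le_rfl).le
    · subst h; rw [hdet]
  have ht0 : 0 ≤ (conj (w 0) * w m).im := by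
    rcases Nat.eq_zero_or_pos m with h | h
    · subst h; rw [hdet]
    · exact (part1 0 m h hm).le
  refine ⟨(conj (w m) * w d).im / D, (conj (w 0) * w m).im / D,
    div_nonneg hs0 hDpos.le, div_nonneg ht0 hDpos.le, ?_⟩
  have cramer : ((conj (w m) * w d).im : ℂ) * w 0 + ((conj (w 0) * w m).im : ℂ) * w d
      = (D : ℂ) * w m := by
    rw [hD]
    apply Complex.ext <;>
      simp [Complex.mul_im, Complex.mul_re, Complex.add_re, Complex.add_im] <;> ring
  have hDne : (D : ℂ) ≠ 0 := by exact_mod_cast hDpos.ne'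
  show w m = _ * w 0 + _ * w d
  rw [Complex.ofReal_div, Complex.ofReal_div, div_mul_eq_mul_div, div_mul_eq_mul_div,
    ← add_div, eq_div_iff hDne]
  linear_combination -cramer
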